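/- Let P be a D-valued partial lattice with property (Id∨), and let f : P → D be an affine lower function given by f(a) = ⋁_{i<n}(⟦a≤u_i⟧ ∧ α_i). Then there exists a least ideal function g on P with f ≤ g (pointwise), namely g(a) = ⋁_{∅⊂I⊆n}(⟦a ∈ Id(u^{(I)})⟧ ∧ ⋀_{i∈I}α_i), where u^{(I)} = {u_i : i ∈ I}; moreover g is itself an affine lower function. -/

import Mathlib

open Finset

/-- The Boolean value `⟦x = y⟧ = ⟦x ≤ y⟧ ⊓ ⟦y ≤ x⟧` in a `D`-valued poset. -/
def eqv {D P : Type*} [DistribLattice D] (le : P → P → D) (x y : P) : D :=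
  le x y ⊓ le y x

/-- The Boolean value `⟦x ∈ Z⟧ = ⋁_{z ∈ Z} ⟦x = z⟧` for a nonempty finite `Z`. -/
def memv {D P : Type*} [DistribLattice D] (le : P → P → D) (x : P)
    (Z : Finset P) (hZ : Z.Nonempty) : D :=
  Z.sup' hZ (eqv le x)

/-- The Boolean value `⟦X ⊆ Y⟧ = ⋀_{x ∈ X} ⟦x ∈ Y⟧`. -/
def subv {D P : Type*} [DistribLattice D] (le : P → P → D)
    (X : Finset P) (hX : X.Nonempty) (Y : Finset P) (hY : Y.Nonempty) : D :=
  X.inf' hX fun x => memv le x Y hY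

/-- The Boolean value `⟦X = Y⟧ = ⟦X ⊆ Y⟧ ⊓ ⟦Y ⊆ X⟧`. -/
def setEqv {D P : Type*} [DistribLattice D] (le : P → P → D)
    (X : Finset P) (hX : X.Nonempty) (Y : Finset P) (hY : Y.Nonempty) : D :=
  subv le X hX Y hY ⊓ subv le Y hY X hX

/-- A `D`-valued poset: a set `P` with Boolean values `⟦a ≤ b⟧ ∈ D` satisfying
reflexivity and transitivity. -/
structure DValuedPoset (D P : Type*) [DistribLattice D] [OrderTop D] where
  le : P → P → D
  le_refl : ∀ a, le a a = ⊤
  le_trans : ∀ a b c, le a b ⊓ le b c ≤ le a c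

/-- A `D`-valued partial lattice: a `D`-valued poset with Boolean values
`⟦a = ⋁X⟧` and `⟦a = ⋀X⟧` satisfying conditions (1), (1*), (2), (2*), (3), (3*). -/
structure DValuedPartialLattice (D P : Type*) [DistribLattice D] [OrderTop D]
    extends DValuedPoset D P where
  jn : P → Finset P → D
  mt : P → Finset P → D
  jn_le : ∀ a b (X : Finset P) (hX : X.Nonempty),
    jn a X ⊓ le a b = jn a X ⊓ X.inf' hX fun x => le x b
  mt_le : ∀ a b (X : Finset P) (hX : X.Nonempty),
    mt a X ⊓ le b a = mt a X ⊓ X.inf' hX fun x => le b x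
  jn_congr : ∀ a (X Y : Finset P) (hX : X.Nonempty) (hY : Y.Nonempty),
    jn a X ⊓ setEqv le X hX Y hY ≤ jn a Y
  mt_congr : ∀ a (X Y : Finset P) (hX : X.Nonempty) (hY : Y.Nonempty),
    mt a X ⊓ setEqv le X hX Y hY ≤ mt a Y
  jn_eq : ∀ a b (X : Finset P), jn a X ⊓ eqv le a b ≤ jn b X
  mt_eq : ∀ a b (X : Finset P), mt a X ⊓ eqv le a b ≤ mt b X

variable {D P : Type*} [DistribLattice D] [OrderTop D]

/-- The Boolean value `⟦a ≤ ⋁Z⟧`, computed from a chosen join-sample `js Z` of `Z`. -/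
def bvLeJoin (V : DValuedPartialLattice D P)
    (js : Finset P → Finset P)
    (hjsne : ∀ Z : Finset P, Z.Nonempty → (js Z).Nonempty)
    (Z : Finset P) (hZ : Z.Nonempty) (a : P) : D :=
  (js Z).sup' (hjsne Z hZ) fun u => V.le a u ⊓ V.jn u Z

/-- The Boolean values `⟦a ∈ Id_n(X, U)⟧`, defined inductively:
`⟦a∈Id_0(X,U)⟧ = ⋁_{x∈X}⟦a≤x⟧` and
`⟦a∈Id_{n+1}(X,U)⟧ = ⟦a∈Id_n(X,U)⟧ ⊔ ⋁_{∅⊂Z⊆U}(⟦a≤⋁Z⟧ ⊓ ⋀_{z∈Z}⟦z∈Id_n(X,U)⟧)`. -/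
def bvIdN (V : DValuedPartialLattice D P)
    (js : Finset P → Finset P)
    (hjsne : ∀ Z : Finset P, Z.Nonempty → (js Z).Nonempty)
    (X U : Finset P) (hX : X.Nonempty) (hU : U.Nonempty) : ℕ → P → D
  | 0, a => X.sup' hX (V.le a)
  | n + 1, a =>
      bvIdN V js hjsne X U hX hU n a ⊔
        (U.powerset.filter fun Z => Z.Nonempty).attach.sup'
          ⟨⟨U, Finset.mem_filter.mpr
              ⟨Finset.mem_powerset.mpr (Finset.Subset.refl U), hU⟩⟩,
            Finset.mem_attach _ _⟩
          fun Z =>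
            bvLeJoin V js hjsne Z.1 (Finset.mem_filter.mp Z.2).2 a ⊓
              Z.1.inf' (Finset.mem_filter.mp Z.2).2
                fun z => bvIdN V js hjsne X U hX hU n z

/-- A lower function: `f(y) ⊓ ⟦x≤y⟧ ≤ f(x)`. -/
def IsLowerFct (V : DValuedPartialLattice D P) (f : P → D) : Prop :=
  ∀ x y, f y ⊓ V.le x y ≤ f x

/-- An ideal function: a lower function with `⟦a=⋁X⟧ ⊓ ⋀_{x∈X}f(x) ≤ f(a)`. -/
def IsIdealFct (V : DValuedPartialLattice D P) (f : P → D) : Prop :=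
  IsLowerFct V f ∧
    ∀ (a : P) (X : Finset P) (hX : X.Nonempty), V.jn a X ⊓ X.inf' hX f ≤ f a

section Aux

variable (V : DValuedPartialLattice D P) (js : Finset P → Finset P)
  (hjsne : ∀ Z : Finset P, Z.Nonempty → (js Z).Nonempty)

/-- The second summand in the recursive definition of `bvIdN`. -/
def stepSup (U : Finset P) (hU : U.Nonempty) (W : P → D) (a : P) : D :=
  (U.powerset.filter fun Z => Z.Nonempty).attach.sup'
    ⟨⟨U, Finset.mem_filter.mpr
        ⟨Finset.mem_powerset.mpr (Finset.Subset.refl U), hU⟩⟩,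
      Finset.mem_attach _ _⟩
    fun Z =>
      bvLeJoin V js hjsne Z.1 (Finset.mem_filter.mp Z.2).2 a ⊓
        Z.1.inf' (Finset.mem_filter.mp Z.2).2 W

theorem bvIdN_succ (X U : Finset P) (hX : X.Nonempty) (hU : U.Nonempty) (n : ℕ) (a : P) :
    bvIdN V js hjsne X U hX hU (n + 1) a =
      bvIdN V js hjsne X U hX hU n a ⊔
        stepSup V js hjsne U hU (fun z => bvIdN V js hjsne X U hX hU n z) a := rfl

theorem bvIdN_zero (X U : Finset P) (hX : X.Nonempty) (hU : U.Nonempty) (a : P) :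
    bvIdN V js hjsne X U hX hU 0 a = X.sup' hX (V.le a) := rfl

theorem le_stepSup {U : Finset P} (hU : U.Nonempty) {Z : Finset P} (hZ : Z.Nonempty)
    (hZU : Z ⊆ U) (W : P → D) (a : P) :
    bvLeJoin V js hjsne Z hZ a ⊓ Z.inf' hZ W ≤ stepSup V js hjsne U hU W a := by
  unfold stepSup
  exact Finset.le_sup'_of_le _ (Finset.mem_attach _ ⟨Z, Finset.mem_filter.mpr ⟨Finset.mem_powerset.mpr hZU, hZ⟩⟩) le_rfl

theorem stepSup_le {U : Finset P} (hU : U.Nonempty) {W : P → D} {a : P} {c : D}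
    (h : ∀ (Z : Finset P) (hZ : Z.Nonempty), Z ⊆ U →
      bvLeJoin V js hjsne Z hZ a ⊓ Z.inf' hZ W ≤ c) :
    stepSup V js hjsne U hU W a ≤ c := by
  unfold stepSup
  exact Finset.sup'_le _ _ fun Z _ =>
    h Z.1 (Finset.mem_filter.mp Z.2).2 (Finset.mem_powerset.mp (Finset.mem_filter.mp Z.2).1)

theorem stepSup_inf_le {U : Finset P} (hU : U.Nonempty) {W : P → D} {a : P} {c d : D}
    (h : ∀ (Z : Finset P) (hZ : Z.Nonempty), Z ⊆ U →
      (bvLeJoin V js hjsne Z hZ a ⊓ Z.inf' hZ W) ⊓ c ≤ d) :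
    stepSup V js hjsne U hU W a ⊓ c ≤ d := by
  unfold stepSup
  refine le_trans (le_of_eq (Finset.sup'_inf_distrib_right _ _ _)) ?_
  exact Finset.sup'_le _ _ fun Z _ =>
    h Z.1 (Finset.mem_filter.mp Z.2).2 (Finset.mem_powerset.mp (Finset.mem_filter.mp Z.2).1)

theorem stepSup_mono_W {U : Finset P} (hU : U.Nonempty) {W W' : P → D} (a : P)
    (h : ∀ z ∈ U, W z ≤ W' z) :
    stepSup V js hjsne U hU W a ≤ stepSup V js hjsne U hU W' a := by
  refine stepSup_le V js hjsne hU fun Z hZ hZU => ?_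
  refine le_trans (inf_le_inf_left _ ?_) (le_stepSup V js hjsne hU hZ hZU W' a)
  exact Finset.le_inf' _ _ fun z hz => le_trans (Finset.inf'_le _ hz) (h z (hZU hz))

theorem stepSup_mono_U {U U' : Finset P} (hU : U.Nonempty) (hU' : U'.Nonempty)
    (hUU : U ⊆ U') (W : P → D) (a : P) :
    stepSup V js hjsne U hU W a ≤ stepSup V js hjsne U' hU' W a :=
  stepSup_le V js hjsne hU fun Z hZ hZU =>
    le_stepSup V js hjsne hU' hZ (hZU.trans hUU) W a

theorem bvIdN_mono_succ (X U : Finset P) (hX : X.Nonempty) (hU : U.Nonempty) (n : ℕ) (a : P) :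
    bvIdN V js hjsne X U hX hU n a ≤ bvIdN V js hjsne X U hX hU (n + 1) a := by
  rw [bvIdN_succ]; exact le_sup_left

theorem bvIdN_mono_n (X U : Finset P) (hX : X.Nonempty) (hU : U.Nonempty)
    {m m' : ℕ} (h : m ≤ m') (a : P) :
    bvIdN V js hjsne X U hX hU m a ≤ bvIdN V js hjsne X U hX hU m' a := by
  induction h with
  | refl => exact le_rfl
  | step h ih => exact ih.trans (bvIdN_mono_succ V js hjsne X U hX hU _ a)

theorem bvIdN_mono_X {X X' U : Finset P} (hX : X.Nonempty) (hX' : X'.Nonempty)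
    (hU : U.Nonempty) (hXX : X ⊆ X') (n : ℕ) (a : P) :
    bvIdN V js hjsne X U hX hU n a ≤ bvIdN V js hjsne X' U hX' hU n a := by
  induction n generalizing a with
  | zero => exact Finset.sup'_mono _ hXX hX
  | succ n ih =>
      rw [bvIdN_succ, bvIdN_succ]
      exact sup_le_sup (ih a) (stepSup_mono_W V js hjsne hU a fun z _ => ih z)

theorem bvIdN_mono_U {X U U' : Finset P} (hX : X.Nonempty) (hU : U.Nonempty)
    (hU' : U'.Nonempty) (hUU : U ⊆ U') (n : ℕ) (a : P) :
    bvIdN V js hjsne X U hX hU n a ≤ bvIdN V js hjsne X U' hX hU' n a := by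
  induction n generalizing a with
  | zero => exact le_rfl
  | succ n ih =>
      rw [bvIdN_succ, bvIdN_succ]
      refine sup_le_sup (ih a) ?_
      exact le_trans (stepSup_mono_W V js hjsne hU a fun z _ => ih z)
        (stepSup_mono_U V js hjsne hU hU' hUU _ a)

theorem bvLeJoin_lower (Z : Finset P) (hZ : Z.Nonempty) (a b : P) :
    bvLeJoin V js hjsne Z hZ b ⊓ V.le a b ≤ bvLeJoin V js hjsne Z hZ a := by
  unfold bvLeJoin
  rw [Finset.sup'_inf_distrib_right]
  refine Finset.sup'_le _ _ fun w hw => ?_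
  refine le_trans ?_ (Finset.le_sup' _ hw)
  refine le_inf ?_ (le_trans inf_le_left inf_le_right)
  calc V.le b w ⊓ V.jn w Z ⊓ V.le a b ≤ V.le a b ⊓ V.le b w :=
        le_inf inf_le_right (le_trans inf_le_left inf_le_left)
    _ ≤ V.le a w := V.le_trans a b w

theorem bvIdN_lower (X U : Finset P) (hX : X.Nonempty) (hU : U.Nonempty) (n : ℕ) (a b : P) :
    bvIdN V js hjsne X U hX hU n b ⊓ V.le a b ≤ bvIdN V js hjsne X U hX hU n a := by
  induction n generalizing a b with
  | zero =>
      rw [bvIdN_zero, bvIdN_zero, Finset.sup'_inf_distrib_right]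
      refine Finset.sup'_le _ _ fun x hx => le_trans ?_ (Finset.le_sup' _ hx)
      calc V.le b x ⊓ V.le a b ≤ V.le a b ⊓ V.le b x := inf_comm _ _ |>.le
        _ ≤ V.le a x := V.le_trans a b x
  | succ n ih =>
      rw [bvIdN_succ, bvIdN_succ, inf_sup_right]
      refine sup_le_sup (ih a b) ?_
      refine stepSup_inf_le V js hjsne hU fun Z hZ hZU => ?_
      refine le_trans ?_ (le_stepSup V js hjsne hU hZ hZU _ a)
      refine le_inf ?_ (le_trans inf_le_left inf_le_right)
      exact le_trans (inf_le_inf_right _ inf_le_left) (bvLeJoin_lower V js hjsne Z hZ a b)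

theorem jn_le_bvLeJoin
    (hjs : ∀ (Z : Finset P) (hZ : Z.Nonempty) (x : P),
      V.jn x Z ≤ (js Z).sup' (hjsne Z hZ) fun w => V.jn w Z)
    (Z : Finset P) (hZ : Z.Nonempty) (a : P) :
    V.jn a Z ≤ bvLeJoin V js hjsne Z hZ a := by
  have h1 : V.jn a Z ≤ (js Z).sup' (hjsne Z hZ) fun w => V.jn a Z ⊓ V.jn w Z := by
    rw [← Finset.sup'_inf_distrib_left]
    exact le_inf le_rfl (hjs Z hZ a)
  refine h1.trans (Finset.sup'_le _ _ fun w hw => le_trans ?_ (Finset.le_sup' _ hw))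
  refine le_inf ?_ inf_le_right
  have h2 : V.jn w Z ≤ Z.inf' hZ fun x => V.le x w := by
    have := V.jn_le w w Z hZ
    rw [V.le_refl w, inf_top_eq] at this
    rw [this]; exact inf_le_right
  have h3 : V.jn a Z ⊓ (Z.inf' hZ fun x => V.le x w) ≤ V.le a w := by
    rw [← V.jn_le a w Z hZ]; exact inf_le_right
  exact le_trans (inf_le_inf_left _ h2) h3

theorem bvLeJoin_inf_ideal {h : P → D} (hh : IsIdealFct V h)
    (Z : Finset P) (hZ : Z.Nonempty) (a : P) :
    bvLeJoin V js hjsne Z hZ a ⊓ Z.inf' hZ h ≤ h a := by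
  unfold bvLeJoin
  rw [Finset.sup'_inf_distrib_right]
  refine Finset.sup'_le _ _ fun w hw => ?_
  have h1 : V.le a w ⊓ V.jn w Z ⊓ Z.inf' hZ h ≤ V.le a w ⊓ h w := by
    rw [inf_assoc]
    exact inf_le_inf_left _ (hh.2 w Z hZ)
  refine h1.trans ?_
  rw [inf_comm]
  exact hh.1 a w

end Aux
section IdV

variable [DecidableEq P] (V : DValuedPartialLattice D P) (js : Finset P → Finset P)
  (hjsne : ∀ Z : Finset P, Z.Nonempty → (js Z).Nonempty)
  (idU : Finset P → Finset P) (idn : Finset P → ℕ)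
  (hidUne : ∀ X : Finset P, X.Nonempty → (idU X).Nonempty)

/-- The stabilized ideal value `⟦a ∈ Id(X)⟧`. -/
def idv (X : Finset P) (hX : X.Nonempty) (a : P) : D :=
  bvIdN V js hjsne X (idU X) hX (hidUne X hX) (idn X) a

variable
  (hstab : ∀ (X : Finset P) (hX : X.Nonempty) (Y : Finset P) (hUY : idU X ⊆ Y) (a : P),
      bvIdN V js hjsne X (idU X) hX (hidUne X hX) (idn X) a =
        bvIdN V js hjsne X Y hX (Finset.Nonempty.mono hUY (hidUne X hX)) (idn X + 1) a)

include hstab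

theorem bvIdN_stab (X : Finset P) (hX : X.Nonempty) (Y : Finset P) (hUY : idU X ⊆ Y)
    (hY : Y.Nonempty) :
    ∀ m, idn X + 1 ≤ m → ∀ a,
      bvIdN V js hjsne X Y hX hY m a = idv V js hjsne idU idn hidUne X hX a := by
  intro m
  induction m with
  | zero => omega
  | succ m ih =>
      intro hm a
      rcases Nat.lt_or_ge m (idn X + 1) with hlt | hge
      · have hmx : m = idn X := by omega
        subst hmx
        exact (hstab X hX Y hUY a).symm
      · refine le_antisymm ?_ ?_
        · rw [bvIdN_succ]
          refine sup_le (le_of_eq (ih hge a)) ?_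
          have step1 : stepSup V js hjsne Y hY
              (fun z => bvIdN V js hjsne X Y hX hY m z) a ≤
              stepSup V js hjsne Y hY
              (fun z => bvIdN V js hjsne X Y hX hY (idn X) z) a := by
            refine stepSup_mono_W V js hjsne hY a fun z _ => ?_
            rw [ih hge z]
            exact bvIdN_mono_U V js hjsne hX (hidUne X hX) hY hUY (idn X) z
          refine step1.trans ?_
          have step2 : stepSup V js hjsne Y hY
              (fun z => bvIdN V js hjsne X Y hX hY (idn X) z) a ≤
              bvIdN V js hjsne X Y hX hY (idn X + 1) a := by
            rw [bvIdN_succ]; exact le_sup_right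
          refine step2.trans (le_of_eq ?_)
          exact (hstab X hX Y hUY a).symm
        · rw [← ih hge a]
          exact bvIdN_mono_succ V js hjsne X Y hX hY m a

theorem bvIdN_le_idv (X : Finset P) (hX : X.Nonempty) (U : Finset P) (hU : U.Nonempty)
    (m : ℕ) (a : P) :
    bvIdN V js hjsne X U hX hU m a ≤ idv V js hjsne idU idn hidUne X hX a := by
  set Y := U ∪ idU X with hY
  have hYne : Y.Nonempty := hU.mono Finset.subset_union_left
  have h1 : bvIdN V js hjsne X U hX hU m a ≤ bvIdN V js hjsne X Y hX hYne m a :=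
    bvIdN_mono_U V js hjsne hX hU hYne Finset.subset_union_left m a
  have h2 : bvIdN V js hjsne X Y hX hYne m a ≤
      bvIdN V js hjsne X Y hX hYne (max m (idn X + 1)) a :=
    bvIdN_mono_n V js hjsne X Y hX hYne (le_max_left _ _) a
  have h3 := bvIdN_stab V js hjsne idU idn hidUne hstab X hX Y
    Finset.subset_union_right hYne (max m (idn X + 1)) (le_max_right _ _) a
  exact h1.trans (h2.trans (le_of_eq h3))

omit hstab in
theorem idv_lower (X : Finset P) (hX : X.Nonempty) (a b : P) :
    idv V js hjsne idU idn hidUne X hX b ⊓ V.le a b ≤ idv V js hjsne idU idn hidUne X hX a :=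
  bvIdN_lower V js hjsne X (idU X) hX (hidUne X hX) (idn X) a b

theorem idv_mono_X {X X' : Finset P} (hX : X.Nonempty) (hX' : X'.Nonempty) (hXX : X ⊆ X')
    (a : P) :
    idv V js hjsne idU idn hidUne X hX a ≤ idv V js hjsne idU idn hidUne X' hX' a := by
  refine le_trans (bvIdN_mono_X V js hjsne hX hX' (hidUne X hX) hXX (idn X) a) ?_
  exact bvIdN_le_idv V js hjsne idU idn hidUne hstab X' hX' (idU X) (hidUne X hX) (idn X) a

theorem le_idv {X : Finset P} (hX : X.Nonempty) {x : P} (hx : x ∈ X) (a : P) :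
    V.le a x ≤ idv V js hjsne idU idn hidUne X hX a := by
  have h0 : V.le a x ≤ bvIdN V js hjsne X (idU X) hX (hidUne X hX) 0 a := by
    rw [bvIdN_zero]; exact Finset.le_sup' _ hx
  exact h0.trans (bvIdN_le_idv V js hjsne idU idn hidUne hstab X hX _ _ 0 a)

theorem idv_jn
    (hjs : ∀ (Z : Finset P) (hZ : Z.Nonempty) (x : P),
      V.jn x Z ≤ (js Z).sup' (hjsne Z hZ) fun w => V.jn w Z)
    (X : Finset P) (hX : X.Nonempty) (Z : Finset P) (hZ : Z.Nonempty) (a : P) :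
    V.jn a Z ⊓ Z.inf' hZ (idv V js hjsne idU idn hidUne X hX) ≤
      idv V js hjsne idU idn hidUne X hX a := by
  set Y := idU X ∪ Z with hYdef
  have hYne : Y.Nonempty := hZ.mono Finset.subset_union_right
  have h1 : V.jn a Z ⊓ Z.inf' hZ (idv V js hjsne idU idn hidUne X hX) ≤
      bvLeJoin V js hjsne Z hZ a ⊓
        Z.inf' hZ fun z => bvIdN V js hjsne X Y hX hYne (idn X) z := by
    refine inf_le_inf (jn_le_bvLeJoin V js hjsne hjs Z hZ a) ?_
    refine Finset.le_inf' _ _ fun z hz => le_trans (Finset.inf'_le _ hz) ?_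
    exact bvIdN_mono_U V js hjsne hX (hidUne X hX) hYne Finset.subset_union_left (idn X) z
  refine h1.trans ?_
  have h2 := le_stepSup V js hjsne hYne hZ Finset.subset_union_right
    (fun z => bvIdN V js hjsne X Y hX hYne (idn X) z) a
  refine h2.trans ?_
  have h3 : stepSup V js hjsne Y hYne
      (fun z => bvIdN V js hjsne X Y hX hYne (idn X) z) a ≤
      bvIdN V js hjsne X Y hX hYne (idn X + 1) a := by
    rw [bvIdN_succ]; exact le_sup_right
  exact h3.trans (bvIdN_le_idv V js hjsne idU idn hidUne hstab X hX Y hYne (idn X + 1) a)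

end IdV
section Affine

variable (V : DValuedPartialLattice D P)

/-- An affine lower function, given by a finite set of pairs `(uᵢ, αᵢ)`. -/
def AffineOn (F : P → D) : Prop :=
  ∃ (s : Finset (P × D)) (hs : s.Nonempty), ∀ a, F a = s.sup' hs fun p => V.le a p.1 ⊓ p.2

theorem AffineOn.sup {F G : P → D} (hF : AffineOn V F) (hG : AffineOn V G) :
    AffineOn V fun a => F a ⊔ G a := by
  classical
  obtain ⟨s, hs, hFs⟩ := hF
  obtain ⟨t, ht, hGt⟩ := hG
  refine ⟨s ∪ t, hs.mono Finset.subset_union_left, fun a => ?_⟩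
  show F a ⊔ G a = _
  rw [hFs a, hGt a, Finset.sup'_union hs ht]

theorem AffineOn.inf_const {F : P → D} (hF : AffineOn V F) (c : D) :
    AffineOn V fun a => F a ⊓ c := by
  classical
  obtain ⟨s, hs, h⟩ := hF
  refine ⟨s.image fun p => (p.1, p.2 ⊓ c), hs.image _, fun a => ?_⟩
  show F a ⊓ c = _
  rw [Finset.sup'_image, h a, Finset.sup'_inf_distrib_right]
  exact Finset.sup'_congr _ rfl fun p _ => (inf_assoc _ _ _)

theorem affineOn_congr {F G : P → D} (h : ∀ a, F a = G a) (hG : AffineOn V G) :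
    AffineOn V F := by
  obtain ⟨s, hs, hs'⟩ := hG
  exact ⟨s, hs, fun a => (h a).trans (hs' a)⟩

theorem affineOn_sup' {ι : Type*} (s : Finset ι) (hs : s.Nonempty) (F : ι → P → D)
    (h : ∀ i ∈ s, AffineOn V (F i)) :
    AffineOn V fun a => s.sup' hs fun i => F i a := by
  induction hs using Finset.Nonempty.cons_induction with
  | singleton i =>
      exact affineOn_congr V (fun a => Finset.sup'_singleton _)
        (h i (Finset.mem_singleton_self i))
  | cons i s hi hs ih =>
      refine affineOn_congr V (fun a => Finset.sup'_cons hs _) ?_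
      exact (h i (Finset.mem_cons_self i s)).sup V
        (ih fun j hj => h j (Finset.mem_cons.mpr (Or.inr hj)))

variable (js : Finset P → Finset P)
  (hjsne : ∀ Z : Finset P, Z.Nonempty → (js Z).Nonempty)

theorem affineOn_bvLeJoin_inf (Z : Finset P) (hZ : Z.Nonempty) (c : D) :
    AffineOn V fun a => bvLeJoin V js hjsne Z hZ a ⊓ c := by
  classical
  refine ⟨(js Z).image fun w => (w, V.jn w Z ⊓ c), (hjsne Z hZ).image _, fun a => ?_⟩
  show bvLeJoin V js hjsne Z hZ a ⊓ c = _
  rw [Finset.sup'_image]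
  unfold bvLeJoin
  rw [Finset.sup'_inf_distrib_right]
  exact Finset.sup'_congr _ rfl fun w _ => (inf_assoc _ _ _)

theorem affineOn_bvIdN (X U : Finset P) (hX : X.Nonempty) (hU : U.Nonempty) :
    ∀ m, AffineOn V fun a => bvIdN V js hjsne X U hX hU m a := by
  intro m
  induction m with
  | zero =>
      classical
      refine ⟨X.image fun x => (x, ⊤), hX.image _, fun a => ?_⟩
      show bvIdN V js hjsne X U hX hU 0 a = _
      rw [bvIdN_zero, Finset.sup'_image]
      exact Finset.sup'_congr _ rfl fun x _ => (inf_top_eq _).symm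
  | succ m ih =>
      have : AffineOn V fun a =>
          bvIdN V js hjsne X U hX hU m a ⊔
            stepSup V js hjsne U hU (fun z => bvIdN V js hjsne X U hX hU m z) a := by
        refine AffineOn.sup V ih ?_
        unfold stepSup
        exact affineOn_sup' V _ _ _ fun Z _ =>
          affineOn_bvLeJoin_inf V js hjsne Z.1 (Finset.mem_filter.mp Z.2).2 _
      exact this

end Affine

section Minimal

variable (V : DValuedPartialLattice D P) (js : Finset P → Finset P)
  (hjsne : ∀ Z : Finset P, Z.Nonempty → (js Z).Nonempty)

theorem bvIdN_le_of_ideal {h : P → D} (hh : IsIdealFct V h) {X : Finset P} (hX : X.Nonempty)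
    {c : D} (hbase : ∀ x ∈ X, ∀ a, V.le a x ⊓ c ≤ h a) (U : Finset P) (hU : U.Nonempty) :
    ∀ m a, bvIdN V js hjsne X U hX hU m a ⊓ c ≤ h a := by
  intro m
  induction m with
  | zero =>
      intro a
      rw [bvIdN_zero, Finset.sup'_inf_distrib_right]
      exact Finset.sup'_le _ _ fun x hx => hbase x hx a
  | succ m ih =>
      intro a
      rw [bvIdN_succ, inf_sup_right]
      refine sup_le (ih a) ?_
      refine stepSup_inf_le V js hjsne hU fun Z hZ hZU => ?_
      have h1 : Z.inf' hZ (fun z => bvIdN V js hjsne X U hX hU m z) ⊓ c ≤ Z.inf' hZ h :=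
        Finset.le_inf' _ _ fun z hz =>
          le_trans (inf_le_inf_right c (Finset.inf'_le _ hz)) (ih z)
      calc bvLeJoin V js hjsne Z hZ a ⊓
            Z.inf' hZ (fun z => bvIdN V js hjsne X U hX hU m z) ⊓ c
          ≤ bvLeJoin V js hjsne Z hZ a ⊓ Z.inf' hZ h := by
            rw [inf_assoc]; exact inf_le_inf_left _ h1
        _ ≤ h a := bvLeJoin_inf_ideal V js hjsne hh Z hZ a

end Minimal

theorem sup'_inf_sup'_le {ι κ : Type*} {s : Finset ι} {t : Finset κ}
    (hs : s.Nonempty) (ht : t.Nonempty) (F : ι → D) (G : κ → D) {c : D}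
    (h : ∀ i ∈ s, ∀ j ∈ t, F i ⊓ G j ≤ c) :
    s.sup' hs F ⊓ t.sup' ht G ≤ c := by
  rw [Finset.sup'_inf_distrib_right]
  refine Finset.sup'_le _ _ fun i hi => ?_
  rw [Finset.sup'_inf_distrib_left]
  exact Finset.sup'_le _ _ fun j hj => h i hi j hj
section GFun

variable [DecidableEq P] (V : DValuedPartialLattice D P) (js : Finset P → Finset P)
  (hjsne : ∀ Z : Finset P, Z.Nonempty → (js Z).Nonempty)
  (idU : Finset P → Finset P) (idn : Finset P → ℕ)
  (hidUne : ∀ X : Finset P, X.Nonempty → (idU X).Nonempty)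

/-- The index set for the sup defining `g`. -/
def gIdx (n : ℕ) : Finset (Finset (Fin n)) :=
  (Finset.univ : Finset (Fin n)).powerset.filter fun I => I.Nonempty

theorem mem_gIdx_ne {n : ℕ} {I : Finset (Fin n)} (h : I ∈ gIdx n) : I.Nonempty :=
  (Finset.mem_filter.mp h).2

/-- The summand of `g` indexed by a nonempty `I ⊆ Fin n`. -/
def gFun {n : ℕ} (u : Fin n → P) (α : Fin n → D) (I : {x // x ∈ gIdx n}) (a : P) : D :=
  idv V js hjsne idU idn hidUne (I.1.image u) ((mem_gIdx_ne I.2).image u) a ⊓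
    I.1.inf' (mem_gIdx_ne I.2) α

end GFun
/-- if `P` is a `D`-valued partial lattice with (Id∨) and
`f(a) = ⋁_{i<n}(⟦a≤u_i⟧ ⊓ α_i)` is an affine lower function, then
`g(a) = ⋁_{∅⊂I⊆n}(⟦a ∈ Id(u^{(I)})⟧ ⊓ ⋀_{i∈I}α_i)` is the least ideal function above `f`,
and `g` is itself an affine lower function. -/
theorem least_ideal_function_above_affine [Nonempty P] [DecidableEq P]
    (V : DValuedPartialLattice D P)
    -- `P` is finitely join-sampled, with a chosen join-sample `js Z` for each `Z`
    (js : Finset P → Finset P)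
    (hjsne : ∀ Z : Finset P, Z.Nonempty → (js Z).Nonempty)
    (hjs : ∀ (Z : Finset P) (hZ : Z.Nonempty) (x : P),
      V.jn x Z ≤ (js Z).sup' (hjsne Z hZ) fun w => V.jn w Z)
    -- (Id∨): every nonempty finite `X` has an (Id∨)-sample `idU X` with index `idn X`
    (idU : Finset P → Finset P) (idn : Finset P → ℕ)
    (hidUne : ∀ X : Finset P, X.Nonempty → (idU X).Nonempty)
    (hstab : ∀ (X : Finset P) (hX : X.Nonempty) (Y : Finset P) (hUY : idU X ⊆ Y) (a : P),
      bvIdN V js hjsne X (idU X) hX (hidUne X hX) (idn X) a =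
        bvIdN V js hjsne X Y hX (Finset.Nonempty.mono hUY (hidUne X hX)) (idn X + 1) a)
    -- the affine lower function `f`
    (n : ℕ) (hn : 0 < n) (u : Fin n → P) (α : Fin n → D) :
    let f : P → D := fun a =>
      (Finset.univ : Finset (Fin n)).sup' ⟨⟨0, hn⟩, Finset.mem_univ _⟩
        fun i => V.le a (u i) ⊓ α i
    let g : P → D := fun a =>
      ((Finset.univ : Finset (Fin n)).powerset.filter fun I => I.Nonempty).attach.sup'
        ⟨⟨Finset.univ, Finset.mem_filter.mpr
            ⟨Finset.mem_powerset.mpr (Finset.Subset.refl _),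
              ⟨⟨0, hn⟩, Finset.mem_univ _⟩⟩⟩,
          Finset.mem_attach _ _⟩
        fun I =>
          bvIdN V js hjsne (I.1.image u) (idU (I.1.image u))
            (Finset.Nonempty.image (Finset.mem_filter.mp I.2).2 u)
            (hidUne _ (Finset.Nonempty.image (Finset.mem_filter.mp I.2).2 u))
            (idn (I.1.image u)) a ⊓
          I.1.inf' (Finset.mem_filter.mp I.2).2 α
    IsIdealFct V g ∧
      (∀ a, f a ≤ g a) ∧
      (∀ h : P → D, IsIdealFct V h → (∀ a, f a ≤ h a) → ∀ a, g a ≤ h a) ∧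
      (∃ (m : ℕ) (hm : 0 < m) (v : Fin m → P) (β : Fin m → D), ∀ a,
        g a = (Finset.univ : Finset (Fin m)).sup' ⟨⟨0, hm⟩, Finset.mem_univ _⟩
          fun i => V.le a (v i) ⊓ β i) := by
  intro f g
  classical
  have hIS : (gIdx n).attach.Nonempty :=
    ⟨⟨Finset.univ, Finset.mem_filter.mpr
        ⟨Finset.mem_powerset.mpr (Finset.Subset.refl _), ⟨⟨0, hn⟩, Finset.mem_univ _⟩⟩⟩,
      Finset.mem_attach _ _⟩
  have hfeq : ∀ a, f a = (Finset.univ : Finset (Fin n)).sup' ⟨⟨0, hn⟩, Finset.mem_univ _⟩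
      (fun i => V.le a (u i) ⊓ α i) := fun a => rfl
  have hg : ∀ a, g a = (gIdx n).attach.sup' hIS
      (fun I => gFun V js hjsne idU idn hidUne u α I a) := fun a => rfl
  -- `g` is a lower function
  have glow : IsLowerFct V g := by
    intro x y
    rw [hg y, hg x, Finset.sup'_inf_distrib_right]
    refine Finset.sup'_le _ _ fun I hI => le_trans ?_ (Finset.le_sup' _ hI)
    unfold gFun
    refine le_inf ?_ (le_trans inf_le_left inf_le_right)
    refine le_trans (inf_le_inf_right _ inf_le_left) ?_
    exact idv_lower V js hjsne idU idn hidUne _ _ x y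
  -- auxiliary: distributing a finite inf of `g` over the sups
  have claimF : ∀ (X : Finset P) (hX : X.Nonempty),
      X.inf' hX g ≤ (gIdx n).attach.sup' hIS (fun I =>
        (X.inf' hX fun x => idv V js hjsne idU idn hidUne (I.1.image u)
          ((mem_gIdx_ne I.2).image u) x) ⊓ I.1.inf' (mem_gIdx_ne I.2) α) := by
    intro X hX
    induction hX using Finset.Nonempty.cons_induction with
    | singleton x =>
        simp only [Finset.inf'_singleton]
        rw [hg x]
        exact le_rfl
    | cons x s hx hs ih =>
        rw [Finset.inf'_cons hs]
        refine le_trans (inf_le_inf_left _ ih) ?_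
        rw [hg x]
        refine sup'_inf_sup'_le hIS hIS _ _ fun I hI J hJ => ?_
        have hKmem : I.1 ∪ J.1 ∈ gIdx n := Finset.mem_filter.mpr
          ⟨Finset.mem_powerset.mpr (Finset.subset_univ _),
            (mem_gIdx_ne I.2).mono Finset.subset_union_left⟩
        refine le_trans ?_ (Finset.le_sup' _ (Finset.mem_attach _ ⟨I.1 ∪ J.1, hKmem⟩))
        unfold gFun
        have h1 : ∀ b, idv V js hjsne idU idn hidUne (I.1.image u)
            ((mem_gIdx_ne I.2).image u) b ≤
            idv V js hjsne idU idn hidUne ((I.1 ∪ J.1).image u)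
              ((mem_gIdx_ne hKmem).image u) b := fun b =>
          idv_mono_X V js hjsne idU idn hidUne hstab _ _
            (Finset.image_subset_image Finset.subset_union_left) b
        have h2 : ∀ b, idv V js hjsne idU idn hidUne (J.1.image u)
            ((mem_gIdx_ne J.2).image u) b ≤
            idv V js hjsne idU idn hidUne ((I.1 ∪ J.1).image u)
              ((mem_gIdx_ne hKmem).image u) b := fun b =>
          idv_mono_X V js hjsne idU idn hidUne hstab _ _
            (Finset.image_subset_image Finset.subset_union_right) b
        refine le_inf ?_ ?_
        · rw [Finset.inf'_cons hs]
          refine le_inf ?_ ?_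
          · exact le_trans (le_trans inf_le_left inf_le_left) (h1 x)
          · refine le_trans (le_trans inf_le_right inf_le_left) ?_
            exact Finset.le_inf' _ _ fun z hz =>
              le_trans (Finset.inf'_le _ hz) (h2 z)
        · rw [Finset.inf'_union (mem_gIdx_ne I.2) (mem_gIdx_ne J.2)]
          exact le_inf (le_trans inf_le_left inf_le_right)
            (le_trans inf_le_right inf_le_right)
  -- `g` is an ideal function
  have gideal : IsIdealFct V g := by
    refine ⟨glow, fun a X hX => ?_⟩
    rw [hg a]
    refine le_trans (inf_le_inf_left _ (claimF X hX)) ?_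
    rw [Finset.sup'_inf_distrib_left]
    refine Finset.sup'_le _ _ fun I hI => le_trans ?_ (Finset.le_sup' _ hI)
    unfold gFun
    refine le_inf ?_ (le_trans inf_le_right inf_le_right)
    refine le_trans (inf_le_inf_left _ inf_le_left) ?_
    exact idv_jn V js hjsne idU idn hidUne hstab hjs _ _ X hX a
  refine ⟨gideal, ?_, ?_, ?_⟩
  -- `f ≤ g`
  · intro a
    rw [hfeq a, hg a]
    refine Finset.sup'_le _ _ fun i _ => ?_
    have hImem : ({i} : Finset (Fin n)) ∈ gIdx n := Finset.mem_filter.mpr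
      ⟨Finset.mem_powerset.mpr (Finset.subset_univ _), Finset.singleton_nonempty i⟩
    refine le_trans ?_ (Finset.le_sup' _ (Finset.mem_attach _ ⟨{i}, hImem⟩))
    unfold gFun
    refine le_inf ?_ ?_
    · refine le_trans inf_le_left ?_
      exact le_idv V js hjsne idU idn hidUne hstab _
        (Finset.mem_image_of_mem u (Finset.mem_singleton_self i)) a
    · refine le_trans inf_le_right (Finset.le_inf' _ _ fun j hj => ?_)
      rw [Finset.mem_singleton.mp hj]
  -- minimality
  · intro h hh hfh a
    rw [hg a]
    refine Finset.sup'_le _ _ fun I _ => ?_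
    have hbase : ∀ x ∈ I.1.image u, ∀ b,
        V.le b x ⊓ I.1.inf' (mem_gIdx_ne I.2) α ≤ h b := by
      intro x hx b
      obtain ⟨i, hi, rfl⟩ := Finset.mem_image.mp hx
      refine le_trans ?_ (hfh b)
      rw [hfeq b]
      refine le_trans ?_ (Finset.le_sup' _ (Finset.mem_univ i))
      exact inf_le_inf_left _ (Finset.inf'_le α hi)
    exact bvIdN_le_of_ideal V js hjsne hh ((mem_gIdx_ne I.2).image u) hbase
      (idU (I.1.image u)) (hidUne _ ((mem_gIdx_ne I.2).image u)) (idn (I.1.image u)) a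
  -- `g` is affine
  · have gaff : AffineOn V g := by
      refine affineOn_congr V hg ?_
      refine affineOn_sup' V _ hIS _ fun I _ => ?_
      exact AffineOn.inf_const V
        (affineOn_bvIdN V js hjsne (I.1.image u) (idU (I.1.image u))
          ((mem_gIdx_ne I.2).image u) (hidUne _ ((mem_gIdx_ne I.2).image u))
          (idn (I.1.image u))) _
    obtain ⟨s, hs, hsg⟩ := gaff
    have hm : 0 < s.toList.length := by
      rw [Finset.length_toList]; exact Finset.card_pos.mpr hs
    refine ⟨s.toList.length, hm, fun i => (s.toList.get i).1,
      fun i => (s.toList.get i).2, fun a => ?_⟩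
    rw [hsg a]
    refine le_antisymm ?_ ?_
    · refine Finset.sup'_le _ _ fun p hp => ?_
      obtain ⟨idx, hidx⟩ := List.mem_iff_get.mp (Finset.mem_toList.mpr hp)
      refine le_trans ?_ (Finset.le_sup' _ (Finset.mem_univ idx))
      show V.le a p.1 ⊓ p.2 ≤ V.le a (s.toList.get idx).1 ⊓ (s.toList.get idx).2
      rw [hidx]
    · refine Finset.sup'_le _ _ fun i _ => ?_
      have hmem : s.toList.get i ∈ s :=
        Finset.mem_toList.mp (s.toList.get_mem i)
      exact Finset.le_sup' (fun p => V.le a p.1 ⊓ p.2) hmem
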